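/- arXiv:2512.10580 — 4 statements merged into one kernel-verified Lean document; each statement's English description precedes it below -/
import Mathlib

section
/- Let n : ℕ and let S : Fin n → Fin n → Prop be a decidable sparsity pattern. Let P be the n × n matrix over the multivariate polynomial ring ℝ[X_{(i,j)} : (i,j) ∈ Fin n × Fin n] whose (i,j) entry is the indeterminate X_{(i,j)} if S i j holds and 0 otherwise. Then det P ≠ 0 (as a polynomial) if and only if there exists a permutation σ of Fin n such that S i (σ i) holds for every i. -/
open MvPolynomial Finset


private noncomputable def mPerm {n : ℕ} (τ : Equiv.Perm (Fin n)) : (Fin n × Fin n) →₀ ℕ :=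
  ∑ i, Finsupp.single (τ i, i) 1

private lemma mPerm_apply {n : ℕ} (τ : Equiv.Perm (Fin n)) (a b : Fin n) :
    mPerm τ (a, b) = if a = τ b then 1 else 0 := by
  classical
  rw [mPerm, Finset.sum_apply']
  rw [Finset.sum_eq_single b]
  · simp [Finsupp.single_apply, Prod.ext_iff, eq_comm]
  · intro i _ hi
    simp [Finsupp.single_apply, Prod.ext_iff, hi]
  · simp

private lemma mPerm_injective {n : ℕ} : Function.Injective (mPerm (n := n)) := by
  intro τ ρ h
  ext b
  have := congrArg (fun f => f (τ b, b)) h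
  simp only [mPerm_apply, if_pos rfl] at this
  by_cases h' : τ b = ρ b
  · exact congrArg Fin.val h'
  · simp [h'] at this

private lemma prod_X_perm {n : ℕ} (τ : Equiv.Perm (Fin n)) :
    (∏ i, (X (τ i, i) : MvPolynomial (Fin n × Fin n) ℝ)) = monomial (mPerm τ) 1 := by
  rw [mPerm]
  induction (univ : Finset (Fin n)) using Finset.induction with
  | empty => simp
  | insert _ _ hx ih => rw [Finset.prod_insert hx, Finset.sum_insert hx, ih, X, monomial_mul, one_mul]

/-- Structural nonsingularity of a sparsity pattern is equivalent to generic
(polynomial) nonvanishing of the determinant: the determinant of the matrix of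
indeterminates with pattern `S` is a nonzero polynomial iff the bipartite incidence
graph of `S` admits a perfect matching. -/
theorem generic_det_ne_zero_iff_matching {n : ℕ}
    (S : Fin n → Fin n → Prop) [∀ i j, Decidable (S i j)] :
    (Matrix.of fun i j =>
        if S i j then (MvPolynomial.X (i, j) : MvPolynomial (Fin n × Fin n) ℝ) else 0).det ≠ 0 ↔
      ∃ σ : Equiv.Perm (Fin n), ∀ i, S i (σ i) := by
  classical
  set P : Matrix (Fin n) (Fin n) (MvPolynomial (Fin n × Fin n) ℝ) :=
    Matrix.of fun i j => if S i j then X (i, j) else 0 with hP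
  constructor
  · intro hdet
    by_contra hno
    push_neg at hno
    apply hdet
    rw [Matrix.det_apply']
    refine Finset.sum_eq_zero fun τ _ => ?_
    obtain ⟨i, hi⟩ : ∃ i, ¬ S (τ i) i := by
      by_contra hall
      push_neg at hall
      obtain ⟨j, hj⟩ := hno τ⁻¹
      exact hj (by simpa using hall (τ⁻¹ j))
    rw [Finset.prod_eq_zero (Finset.mem_univ i) (by simp [hP, hi]), mul_zero]
  · rintro ⟨σ, hσ⟩ hdet
    have hS : ∀ i, S (σ⁻¹ i) i := fun i => by simpa using hσ (σ⁻¹ i)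
    have hterm : ∀ τ : Equiv.Perm (Fin n),
        coeff (mPerm σ⁻¹) (∏ i, P (τ i) i) = if τ = σ⁻¹ then 1 else 0 := by
      intro τ
      by_cases hall : ∀ i, S (τ i) i
      · have hprod : (∏ i, P (τ i) i) = monomial (mPerm τ) 1 := by
          rw [← prod_X_perm]
          exact Finset.prod_congr rfl fun i _ => by simp [hP, hall i]
        rw [hprod, coeff_monomial]
        by_cases ht : τ = σ⁻¹
        · simp [ht]
        · rw [if_neg (fun h => ht (mPerm_injective h)), if_neg ht]
      · push_neg at hall
        obtain ⟨i, hi⟩ := hall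
        have hne : τ ≠ σ⁻¹ := fun h => hi (by rw [h]; exact hS i)
        rw [Finset.prod_eq_zero (Finset.mem_univ i) (by simp [hP, hi])]
        simp [hne]
    have hc : coeff (mPerm σ⁻¹) P.det = ((Equiv.Perm.sign σ⁻¹ : ℤ) : ℝ) := by
      rw [Matrix.det_apply', coeff_sum]
      have : ∀ τ : Equiv.Perm (Fin n),
          coeff (mPerm σ⁻¹) (((Equiv.Perm.sign τ : ℤ) : MvPolynomial (Fin n × Fin n) ℝ)
              * ∏ i, P (τ i) i)
            = ((Equiv.Perm.sign τ : ℤ) : ℝ) * (if τ = σ⁻¹ then 1 else 0) := by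
        intro τ
        rw [← map_intCast (C : ℝ →+* MvPolynomial (Fin n × Fin n) ℝ), coeff_C_mul, hterm]
      rw [Finset.sum_congr rfl fun τ _ => this τ]
      rw [Finset.sum_eq_single σ⁻¹ (fun τ _ hτ => by simp [hτ]) (by simp)]
      simp
    rw [hdet] at hc
    simp only [coeff_zero] at hc
    rcases Int.units_eq_one_or (Equiv.Perm.sign σ⁻¹) with h | h <;> rw [h] at hc <;> norm_num at hc
end

section
/- Let n : ℕ and let S : Fin n → Fin n → Prop be a decidable sparsity pattern such that there exists a permutation σ of Fin n with S i (σ i) for every i. Then the set of assignments v : (Fin n × Fin n) → ℝ for which the matrix with (i,j) entry equal to v(i,j) if S i j and 0 otherwise has zero determinant, is a Lebesgue-null set (has measure zero for the product Lebesgue measure on (Fin n × Fin n) → ℝ). -/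
open MeasureTheory MvPolynomial

/-- The zero set of a nonzero multivariate polynomial over `Fin k` variables is Lebesgue-null. -/
lemma mv_zero_set_null : ∀ (k : ℕ) (p : MvPolynomial (Fin k) ℝ), p ≠ 0 →
    volume {x : Fin k → ℝ | eval x p = 0} = 0 := by
  intro k
  induction k with
  | zero =>
    intro p hp
    obtain ⟨c, rfl⟩ := MvPolynomial.C_surjective (Fin 0) p
    have hc : c ≠ 0 := by simpa using hp
    have : {x : Fin 0 → ℝ | eval x (C c : MvPolynomial (Fin 0) ℝ) = 0} = ∅ := by
      ext x; simp [hc]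
    rw [this]; simp
  | succ k ih =>
    intro p hp
    set q := MvPolynomial.finSuccEquiv ℝ k p with hqdef
    have hq0 : q ≠ 0 := by
      intro h
      apply hp
      have := congrArg (MvPolynomial.finSuccEquiv ℝ k).symm h
      simpa [hqdef] using this
    have hlc : q.leadingCoeff ≠ 0 := Polynomial.leadingCoeff_ne_zero.mpr hq0
    -- the set with variables reorganized as (params, var)
    set T' : Set ((Fin k → ℝ) × ℝ) :=
      {z | Polynomial.eval z.2 (q.map (eval z.1)) = 0} with hT'def
    have hkey : ∀ z : (Fin k → ℝ) × ℝ,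
        Polynomial.eval z.2 (q.map (eval z.1)) = eval (Fin.cons z.2 z.1) p :=
      fun z => (MvPolynomial.eval_eq_eval_mv_eval' z.1 z.2 p).symm
    have hcont : Continuous fun z : (Fin k → ℝ) × ℝ => Polynomial.eval z.2 (q.map (eval z.1)) := by
      simp only [hkey]
      apply (MvPolynomial.continuous_eval p).comp
      apply continuous_pi
      intro i
      refine Fin.cases ?_ ?_ i
      · simpa using continuous_snd
      · intro j; simp only [Fin.cons_succ]; fun_prop
    have hT'meas : MeasurableSet T' :=
      (hcont.measurable) (measurableSet_singleton 0)
    have hT'0 : ((volume : Measure (Fin k → ℝ)).prod (volume : Measure ℝ)) T' = 0 := by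
      rw [MeasureTheory.Measure.measure_prod_null hT'meas]
      have hN : ∀ᵐ s : Fin k → ℝ, eval s q.leadingCoeff ≠ 0 := by
        rw [ae_iff]
        simpa using ih q.leadingCoeff hlc
      filter_upwards [hN] with s hs
      have hmap : q.map (eval s) ≠ 0 := by
        intro h0
        apply hs
        have : (q.map (eval s)).coeff q.natDegree = eval s (q.coeff q.natDegree) :=
          Polynomial.coeff_map _ _
        rw [h0] at this
        rw [Polynomial.leadingCoeff, ← this]
        simp
      have hfin : Set.Finite {y : ℝ | Polynomial.eval y (q.map (eval s)) = 0} :=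
        Polynomial.finite_setOf_isRoot hmap
      have : (Prod.mk s ⁻¹' T') = {y : ℝ | Polynomial.eval y (q.map (eval s)) = 0} := rfl
      rw [this]
      exact hfin.measure_zero _
    -- transfer via the measurable equivalence splitting off coordinate 0
    have mp := MeasureTheory.volume_preserving_piFinSuccAbove (fun _ : Fin (k+1) => ℝ) 0
    set T : Set (ℝ × (Fin k → ℝ)) := Prod.swap ⁻¹' T' with hTdef
    have hTmeas : MeasurableSet T := measurable_swap hT'meas
    have hT0 : ((volume : Measure ℝ).prod (volume : Measure (Fin k → ℝ))) T = 0 := by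
      rw [hTdef, MeasureTheory.Measure.measurePreserving_swap.measure_preimage
        hT'meas.nullMeasurableSet]
      exact hT'0
    have hpre : {x : Fin (k+1) → ℝ | eval x p = 0} =
        (MeasurableEquiv.piFinSuccAbove (fun _ : Fin (k+1) => ℝ) 0) ⁻¹' T := by
      ext x
      have hx : Fin.cons (x 0) (Fin.removeNth 0 x) = x := by
        rw [Fin.removeNth_zero]; exact Fin.cons_self_tail x
      simp only [Set.mem_setOf_eq, Set.mem_preimage, hTdef,
        MeasurableEquiv.piFinSuccAbove_apply, Fin.insertNthEquiv, Equiv.coe_fn_symm_mk,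
        hT'def, Prod.swap_prod_mk]
      rw [hkey (Fin.removeNth 0 x, x 0)]
      simp only [hx]
    rw [hpre, mp.measure_preimage hTmeas.nullMeasurableSet]
    exact hT0

lemma mv_zero_set_null' {ι : Type*} [Fintype ι] (p : MvPolynomial ι ℝ) (hp : p ≠ 0) :
    volume {x : ι → ℝ | eval x p = 0} = 0 := by
  classical
  set e : Fin (Fintype.card ι) ≃ ι := (Fintype.equivFin ι).symm with hedef
  have mp := MeasureTheory.volume_measurePreserving_piCongrLeft (fun _ : ι => ℝ) e
  have hq : MvPolynomial.rename e.symm p ≠ 0 := by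
    intro h
    exact hp ((MvPolynomial.rename_injective _ e.symm.injective).eq_iff.mp (by simpa using h))
  have hmeas : MeasurableSet {x : ι → ℝ | eval x p = 0} :=
    (MvPolynomial.continuous_eval p).measurable (measurableSet_singleton 0)
  rw [← mp.measure_preimage hmeas.nullMeasurableSet]
  have hpre : (MeasurableEquiv.piCongrLeft (fun _ : ι => ℝ) e) ⁻¹' {x : ι → ℝ | eval x p = 0}
      = {y : Fin (Fintype.card ι) → ℝ | eval y (MvPolynomial.rename e.symm p) = 0} := by
    ext y
    simp only [Set.mem_preimage, Set.mem_setOf_eq, MvPolynomial.eval_rename]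
    have : (MeasurableEquiv.piCongrLeft (fun _ : ι => ℝ) e) y = y ∘ e.symm := by
      ext i
      rw [MeasurableEquiv.coe_piCongrLeft, Equiv.piCongrLeft_apply_eq_cast]
      exact cast_eq rfl _
    rw [this]
  rw [hpre]
  exact mv_zero_set_null _ _ hq

/-- Structural nonsingularity is generically sufficient for numerical nonsingularity:
if the sparsity pattern `S` admits a perfect matching, then the set of entry
assignments making the resulting matrix singular is Lebesgue-null. -/
theorem singular_matrices_null_of_matching {n : ℕ}
    (S : Fin n → Fin n → Prop) [∀ i j, Decidable (S i j)]
    (hS : ∃ σ : Equiv.Perm (Fin n), ∀ i, S i (σ i)) :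
    volume {v : Fin n × Fin n → ℝ |
      (Matrix.of fun i j => if S i j then v (i, j) else 0).det = 0} = 0 := by
  obtain ⟨σ, hσ⟩ := hS
  set P : MvPolynomial (Fin n × Fin n) ℝ :=
    (Matrix.of fun i j => if S i j then (X (i, j) : MvPolynomial (Fin n × Fin n) ℝ) else 0).det
    with hPdef
  have heval : ∀ v : Fin n × Fin n → ℝ,
      eval v P = (Matrix.of fun i j => if S i j then v (i, j) else 0).det := by
    intro v
    rw [hPdef, RingHom.map_det]
    congr 1
    ext i j
    simp only [RingHom.mapMatrix_apply, Matrix.map_apply, Matrix.of_apply]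
    split <;> simp
  have hP : P ≠ 0 := by
    intro h
    have h1 : eval (fun ij : Fin n × Fin n => if ij.2 = σ ij.1 then (1:ℝ) else 0) P ≠ 0 := by
      rw [heval]
      have : (Matrix.of fun i j => if S i j then
          (if j = σ i then (1:ℝ) else 0) else 0) = σ.permMatrix ℝ := by
        ext i j
        simp only [Matrix.of_apply, Equiv.Perm.permMatrix, PEquiv.toMatrix_apply,
          Equiv.toPEquiv_apply, Option.mem_def, Option.some.injEq]
        by_cases hj : j = σ i
        · subst hj; simp [hσ i]
        · rw [if_neg (fun h : σ i = j => hj h.symm)]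
          simp [hj]
      rw [this, Matrix.det_permutation]
      simp [Int.cast_injective]
    rw [h] at h1
    simp at h1
  have := mv_zero_set_null' P hP
  convert this using 2
  ext v
  simp [heval]
end

section
/- Let x⁻, y⁻, ẋ⁻, ẏ⁻, x⁺, y⁺, ẋ⁺, ẏ⁺, λ̂ be real numbers satisfying the restart equations: x⁺ = x⁻, y⁺ = y⁻, ẋ⁺ − ẋ⁻ + λ̂·x⁻ = 0, and ẏ⁺ − ẏ⁻ + λ̂·y⁻ = 0. Then ẋ⁺·y⁺ − ẏ⁺·x⁺ = ẋ⁻·y⁻ − ẏ⁻·x⁻, i.e., the angular momentum is preserved across the mode change. -/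
/-- The restart system of the cup-and-ball preserves angular momentum across the
mode change. -/
theorem restart_preserves_angular_momentum
    (xm ym dxm dym xp yp dxp dyp lamh : ℝ)
    (h1 : xp = xm) (h2 : yp = ym)
    (h3 : dxp - dxm + lamh * xm = 0)
    (h4 : dyp - dym + lamh * ym = 0) :
    dxp * yp - dyp * xp = dxm * ym - dym * xm := by
  subst h1 h2
  linear_combination yp * h3 - xp * h4
end

section
/- Let x⁻, y⁻, ẋ⁻, ẏ⁻ be real numbers with (x⁻, y⁻) ≠ (0, 0). Then there exists a unique tuple (x⁺, y⁺, ẋ⁺, ẏ⁺, λ̂) of real numbers satisfying the restart equations: x⁺ = x⁻, y⁺ = y⁻, ẋ⁺ − ẋ⁻ + λ̂·x⁻ = 0, ẏ⁺ − ẏ⁻ + λ̂·y⁻ = 0, and x⁻·ẋ⁺ + y⁻·ẏ⁺ = 0; moreover λ̂ = (x⁻·ẋ⁻ + y⁻·ẏ⁻)/((x⁻)² + (y⁻)²). -/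
/-- Determinism of the cup-and-ball restart (Requirement 1.1): the restart system
uniquely determines the restart values and the rescaled tension `λ̂`, which equals
`(x⁻ ẋ⁻ + y⁻ ẏ⁻)/((x⁻)² + (y⁻)²)`. -/
theorem restart_is_deterministic (xm ym dxm dym : ℝ) (hne : (xm, ym) ≠ (0, 0)) :
    (∃! t : ℝ × ℝ × ℝ × ℝ × ℝ,
        t.1 = xm ∧ t.2.1 = ym ∧
        t.2.2.1 - dxm + t.2.2.2.2 * xm = 0 ∧
        t.2.2.2.1 - dym + t.2.2.2.2 * ym = 0 ∧
        xm * t.2.2.1 + ym * t.2.2.2.1 = 0) ∧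
    (∀ xp yp dxp dyp lamh : ℝ,
        xp = xm → yp = ym →
        dxp - dxm + lamh * xm = 0 →
        dyp - dym + lamh * ym = 0 →
        xm * dxp + ym * dyp = 0 →
        lamh = (xm * dxm + ym * dym) / (xm ^ 2 + ym ^ 2)) := by
  have hd : xm ^ 2 + ym ^ 2 ≠ 0 := by
    intro h
    apply hne
    have hx : xm = 0 := by nlinarith [sq_nonneg xm, sq_nonneg ym]
    have hy : ym = 0 := by nlinarith [sq_nonneg xm, sq_nonneg ym]
    simp [hx, hy]
  set l : ℝ := (xm * dxm + ym * dym) / (xm ^ 2 + ym ^ 2) with hl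
  have hld : l * (xm ^ 2 + ym ^ 2) = xm * dxm + ym * dym := by
    rw [hl, div_mul_cancel₀ _ hd]
  have key : ∀ lamh : ℝ, ∀ dxp dyp : ℝ,
      dxp - dxm + lamh * xm = 0 → dyp - dym + lamh * ym = 0 →
      xm * dxp + ym * dyp = 0 → lamh = l := by
    intro lamh dxp dyp h1 h2 h3
    have : (lamh - l) * (xm ^ 2 + ym ^ 2) = 0 := by
      linear_combination xm * h1 + ym * h2 - h3 - hld
    have := mul_eq_zero.mp this
    rcases this with h | h
    · linarith
    · exact absurd h hd
  refine ⟨⟨(xm, ym, dxm - l * xm, dym - l * ym, l), ⟨rfl, rfl, by ring, by ring, by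
      show xm * (dxm - l * xm) + ym * (dym - l * ym) = 0
      linear_combination -hld⟩, ?_⟩, ?_⟩
  · rintro ⟨a, b, c, d, e⟩ ⟨h1, h2, h3, h4, h5⟩
    simp only at h1 h2 h3 h4 h5 ⊢
    have he : e = l := key e c d h3 h4 h5
    subst he
    have hc : c = dxm - l * xm := by linarith
    have hd' : d = dym - l * ym := by linarith
    simp [h1, h2, hc, hd']
  · intro xp yp dxp dyp lamh _ _ h1 h2 h3
    exact key lamh dxp dyp h1 h2 h3
end
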